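/- arXiv:2602.01432 — 3 statements merged into one kernel-verified Lean document; each statement's English description precedes it below -/
import Mathlib

section
/- Assume K is positive definite, LK − K is positive definite, and sup_{n≥0} K_n(s,s) < ∞ for every s ∈ X, where K₀ = K and K_{n+1} = L K_n. Then for all s,t ∈ X the limit K_∞(s,t) := lim_{n→∞} K_n(s,t) exists in ℂ, and K_∞ is a positive definite kernel. -/
open scoped ComplexOrder

open Filter

def IsPD {X : Type*} (J : X → X → ℂ) : Prop :=
  ∀ (r : ℕ) (x : Fin r → X) (c : Fin r → ℂ),
    0 ≤ ∑ a, ∑ b, (starRingEnd ℂ) (c a) * c b * J (x a) (x b)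

noncomputable def Lop {X : Type*} {m : ℕ} (φ : Fin m → X → X) (J : X → X → ℂ) : X → X → ℂ :=
  fun s t => ∑ i, J (φ i s) (φ i t)

lemma isPD_add {X : Type*} {A B : X → X → ℂ} (hA : IsPD A) (hB : IsPD B) :
    IsPD (fun s t => A s t + B s t) := by
  intro r x c
  have := add_nonneg (hA r x c) (hB r x c)
  simpa [mul_add, Finset.sum_add_distrib] using this

lemma isPD_Lop {X : Type*} {m : ℕ} (φ : Fin m → X → X) {J : X → X → ℂ} (hJ : IsPD J) :
    IsPD (Lop φ J) := by
  intro r x c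
  have h : (∑ a, ∑ b, (starRingEnd ℂ) (c a) * c b * Lop φ J (x a) (x b))
      = ∑ i : Fin m, ∑ a, ∑ b, (starRingEnd ℂ) (c a) * c b * J (φ i (x a)) (φ i (x b)) := by
    simp only [Lop, Finset.mul_sum]
    calc (∑ a, ∑ b, ∑ i : Fin m, (starRingEnd ℂ) (c a) * c b * J (φ i (x a)) (φ i (x b)))
        = ∑ a, ∑ i : Fin m, ∑ b, (starRingEnd ℂ) (c a) * c b * J (φ i (x a)) (φ i (x b)) :=
          Finset.sum_congr rfl fun a _ => Finset.sum_comm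
      _ = ∑ i : Fin m, ∑ a, ∑ b, (starRingEnd ℂ) (c a) * c b * J (φ i (x a)) (φ i (x b)) :=
          Finset.sum_comm
  rw [h]
  exact Finset.sum_nonneg fun i _ => hJ r (fun a => φ i (x a)) c

lemma isPD_diag {X : Type*} {J : X → X → ℂ} (hJ : IsPD J) (s : X) : 0 ≤ J s s := by
  have := hJ 1 ![s] ![1]
  simpa using this

lemma isPD_herm {X : Type*} {J : X → X → ℂ} (hJ : IsPD J) (s t : X) :
    J t s = (starRingEnd ℂ) (J s t) := by
  have h1 := hJ 2 ![s, t] ![1, 1]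
  have h2 := hJ 2 ![s, t] ![1, Complex.I]
  simp [Fin.sum_univ_two] at h1 h2
  have hs := isPD_diag hJ s
  have ht := isPD_diag hJ t
  have hsim : (J s s).im = 0 := ((Complex.le_def.mp hs).2).symm
  have htim : (J t t).im = 0 := ((Complex.le_def.mp ht).2).symm
  have i1 : (J s s + J s t + (J t s + J t t)).im = 0 := ((Complex.le_def.mp h1).2).symm
  have i2 : (J s s + Complex.I * J s t + (-(Complex.I * J t s) + J t t)).im = 0 :=
    ((Complex.le_def.mp h2).2).symm
  simp only [Complex.add_im, Complex.neg_im, Complex.mul_im, Complex.I_re, Complex.I_im,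
    zero_mul, one_mul, zero_add, mul_zero] at i1 i2
  apply Complex.ext <;>
    simp only [Complex.conj_re, Complex.conj_im] <;> linarith


lemma isPD_bound {X : Type*} {J : X → X → ℂ} (hJ : IsPD J) (s t : X) :
    2 * ‖J s t‖ ≤ (J s s).re + (J t t).re := by
  have hs : 0 ≤ (J s s).re := (Complex.le_def.mp (isPD_diag hJ s)).1
  have ht : 0 ≤ (J t t).re := (Complex.le_def.mp (isPD_diag hJ t)).1
  by_cases hz : J s t = 0
  · simp [hz]; linarith
  · set z := J s t with hzdef
    set a : ℝ := ‖z‖ with hadef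
    have ha : (a:ℂ) ≠ 0 := by
      simpa [hadef] using (norm_ne_zero_iff.mpr hz)
    set u : ℂ := -(starRingEnd ℂ) z / a with hudef
    have h := hJ 2 ![s, t] ![1, u]
    simp [Fin.sum_univ_two] at h
    have huz : u * z = -(a:ℂ) := by
      rw [hudef]
      field_simp
      rw [mul_comm]
      rw [Complex.mul_conj]
      rw [Complex.normSq_eq_norm_sq]
      push_cast
      ring
    have hherm : J t s = (starRingEnd ℂ) z := isPD_herm hJ s t
    have huts : (starRingEnd ℂ) u * J t s = -(a:ℂ) := by
      rw [hherm, ← map_mul]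
      rw [mul_comm] at huz
      rw [mul_comm, huz]
      simp
    have huu : (starRingEnd ℂ) u * u * J t t = J t t := by
      have : (starRingEnd ℂ) u * u = 1 := by
        rw [mul_comm, Complex.mul_conj, Complex.normSq_eq_norm_sq, hudef]
        have haa : a ≠ 0 := by simpa [hadef] using norm_ne_zero_iff.mpr hz
        have : ‖-(starRingEnd ℂ) z / ↑a‖ = 1 := by
          rw [norm_div, norm_neg, Complex.norm_conj, Complex.norm_real, Real.norm_eq_abs,
            abs_of_nonneg (norm_nonneg z), ← hadef, div_self haa]
        rw [this]; norm_num
      rw [this, one_mul]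
    rw [← hzdef] at h
    rw [huz, huts, huu] at h
    have := (Complex.le_def.mp h).1
    simp [Complex.add_re] at this
    linarith

/-- under subinvariance and diagonal boundedness, the tower
`K_n = Lⁿ K` converges pointwise to a positive definite kernel `K_∞`. -/
theorem limit_kernel_exists {X : Type*} {m : ℕ} (φ : Fin m → X → X)
    (K : X → X → ℂ) (hK : IsPD K)
    (hsub : IsPD (fun s t => Lop φ K s t - K s t))
    (hbdd : ∀ s : X, ∃ C : ℝ, ∀ n : ℕ, (((Lop φ)^[n] K) s s).re ≤ C) :
    ∃ Kinf : X → X → ℂ, IsPD Kinf ∧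
      ∀ s t : X, Tendsto (fun n => ((Lop φ)^[n] K) s t) atTop (nhds (Kinf s t)) := by
  set Kn : ℕ → X → X → ℂ := fun n => (Lop φ)^[n] K with hKndef
  -- K_{n+1} - K_n is PD
  have hdiff : ∀ n, IsPD (fun s t => Kn (n+1) s t - Kn n s t) := by
    intro n
    induction n with
    | zero => simpa [hKndef] using hsub
    | succ n ih =>
      have h2 := isPD_Lop φ ih
      have heq : Lop φ (fun s t => Kn (n+1) s t - Kn n s t)
          = fun s t => Kn (n+2) s t - Kn (n+1) s t := by
        funext s t
        simp [Lop, Finset.sum_sub_distrib, hKndef, Function.iterate_succ_apply']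
      rwa [heq] at h2
  -- K_q - K_p is PD for p ≤ q
  have hdiff2 : ∀ p q, p ≤ q → IsPD (fun s t => Kn q s t - Kn p s t) := by
    intro p q hpq
    induction q, hpq using Nat.le_induction with
    | base => intro r x c; simp
    | succ q hpq ih =>
      have := isPD_add (hdiff q) ih
      simpa [sub_add_sub_cancel] using this
  -- diagonal monotone
  have hmono : ∀ s : X, Monotone (fun n => (Kn n s s).re) := by
    intro s
    apply monotone_nat_of_le_succ
    intro n
    have h := (Complex.le_def.mp (isPD_diag (hdiff n) s)).1
    simp [Complex.sub_re] at h
    linarith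
  -- diagonal converges
  have hdconv : ∀ s : X, ∃ l : ℝ, Tendsto (fun n => (Kn n s s).re) atTop (nhds l) := by
    intro s
    rcases tendsto_of_monotone (hmono s) with h | h
    · obtain ⟨C, hC⟩ := hbdd s
      exfalso
      obtain ⟨n, hn⟩ := (h.eventually_gt_atTop C).exists
      exact absurd (hC n) (not_le.mpr hn)
    · exact h
  -- pointwise Cauchy
  have hcauchy : ∀ s t : X, ∃ l : ℂ, Tendsto (fun n => Kn n s t) atTop (nhds l) := by
    intro s t
    obtain ⟨ls, hls⟩ := hdconv s
    obtain ⟨lt, hlt⟩ := hdconv t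
    have hb : Tendsto (fun n => ((Kn n s s).re + (Kn n t t).re) / 2) atTop (nhds ((ls + lt)/2)) :=
      (hls.add hlt).div_const 2
    set b : ℕ → ℝ := fun n => ((Kn n s s).re + (Kn n t t).re) / 2 with hbdef
    have hbmono : Monotone b := fun p q h => by
      have h1 := hmono s h
      have h2 := hmono t h
      simp only [hbdef]
      dsimp at h1 h2 ⊢
      linarith
    have hbC : CauchySeq b := hb.cauchySeq
    have key : ∀ p q, p ≤ q → dist (Kn q s t) (Kn p s t) ≤ b q - b p := by
      intro p q hpq
      have := isPD_bound (hdiff2 p q hpq) s t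
      simp only [Complex.sub_re] at this
      rw [Complex.dist_eq]
      simp only [hbdef]
      linarith
    have hC : CauchySeq (fun n => Kn n s t) := by
      rw [Metric.cauchySeq_iff] at hbC ⊢
      intro ε hε
      obtain ⟨N, hN⟩ := hbC ε hε
      refine ⟨N, fun p hp q hq => ?_⟩
      rcases le_total p q with h | h
      · rw [dist_comm]
        calc dist (Kn q s t) (Kn p s t) ≤ b q - b p := key p q h
          _ ≤ |b q - b p| := le_abs_self _
          _ = dist (b q) (b p) := (Real.dist_eq _ _).symm
          _ < ε := hN q hq p hp
      · calc dist (Kn p s t) (Kn q s t) ≤ b p - b q := key q p h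
          _ ≤ |b p - b q| := le_abs_self _
          _ = dist (b p) (b q) := (Real.dist_eq _ _).symm
          _ < ε := hN p hp q hq
    exact cauchySeq_tendsto_of_complete hC
  choose Kinf hKinf using hcauchy
  refine ⟨Kinf, ?_, hKinf⟩
  intro r x c
  have hsum : Tendsto
      (fun n => ∑ a, ∑ b, (starRingEnd ℂ) (c a) * c b * Kn n (x a) (x b)) atTop
      (nhds (∑ a, ∑ b, (starRingEnd ℂ) (c a) * c b * Kinf (x a) (x b))) := by
    refine tendsto_finset_sum _ fun a _ => tendsto_finset_sum _ fun b _ => ?_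
    exact (hKinf (x a) (x b)).const_mul _
  have hnn : ∀ n, 0 ≤ ∑ a, ∑ b, (starRingEnd ℂ) (c a) * c b * Kn n (x a) (x b) := by
    intro n
    have : IsPD (Kn n) := by
      induction n with
      | zero => simpa [hKndef] using hK
      | succ n ih =>
        have := isPD_Lop φ ih
        have heq : Lop φ (Kn n) = Kn (n+1) := by
          funext s t
          simp [hKndef, Function.iterate_succ_apply']
        rwa [heq] at this
    exact this r x c
  rw [Complex.le_def]
  constructor
  · have hre := (Complex.continuous_re.tendsto _).comp hsum
    refine ge_of_tendsto hre ?_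
    filter_upwards with n
    exact (Complex.le_def.mp (hnn n)).1
  · have him := (Complex.continuous_im.tendsto _).comp hsum
    have : ∀ n, (∑ a, ∑ b, (starRingEnd ℂ) (c a) * c b * Kn n (x a) (x b)).im = 0 :=
      fun n => ((Complex.le_def.mp (hnn n)).2).symm
    have h0 : Tendsto (fun _ : ℕ => (0:ℝ)) atTop
        (nhds ((∑ a, ∑ b, (starRingEnd ℂ) (c a) * c b * Kinf (x a) (x b)).im)) := by
      convert him using 1
      funext n
      exact (this n).symm
    exact (tendsto_nhds_unique h0 tendsto_const_nhds).symm
end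

section
/- Under the hypotheses of diagonal boundedness, the limit kernel K_∞(s,t) = lim_n K_n(s,t) satisfies L K_∞ = K_∞ and K_∞ − K is positive definite; moreover K_∞ is minimal among L-invariant majorants: if J is a positive definite kernel with J − K positive definite and LJ = J, then J − K_∞ is positive definite. -/
open scoped ComplexOrder

open Filter

lemma Lop_sub {X : Type*} {m : ℕ} (φ : Fin m → X → X) (A B : X → X → ℂ) :
    Lop φ (fun s t => A s t - B s t) = fun s t => Lop φ A s t - Lop φ B s t := by
  funext s t
  simp [Lop, Finset.sum_sub_distrib]

lemma nonneg_of_tendsto {f : ℕ → ℂ} {z : ℂ} (h : Tendsto f atTop (nhds z))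
    (hf : ∀ n, 0 ≤ f n) : 0 ≤ z := by
  rw [Complex.le_def] at *
  constructor
  · exact le_of_tendsto_of_tendsto' tendsto_const_nhds
      ((Complex.continuous_re.tendsto z).comp h) fun n => (hf n).1
  · symm
    have him : Tendsto (fun n => (f n).im) atTop (nhds z.im) :=
      (Complex.continuous_im.tendsto z).comp h
    have heq : (fun n => (f n).im) = fun _ => (0:ℝ) := funext fun n => ((hf n).2).symm
    rw [heq] at him
    exact tendsto_nhds_unique him tendsto_const_nhds

lemma isPD_limit {X : Type*} {F : ℕ → X → X → ℂ} {G : X → X → ℂ}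
    (h : ∀ s t, Tendsto (fun n => F n s t) atTop (nhds (G s t)))
    (hF : ∀ n, IsPD (F n)) : IsPD G := by
  intro r x c
  have ht : Tendsto (fun n => ∑ a, ∑ b, (starRingEnd ℂ) (c a) * c b * F n (x a) (x b)) atTop
      (nhds (∑ a, ∑ b, (starRingEnd ℂ) (c a) * c b * G (x a) (x b))) := by
    refine tendsto_finset_sum _ fun a _ => tendsto_finset_sum _ fun b _ => ?_
    exact (h (x a) (x b)).const_mul _
  exact nonneg_of_tendsto ht fun n => hF n r x c

/-- the limit kernel `K_∞` is `L`-invariant, majorizes `K`, and is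
the minimal `L`-invariant positive definite majorant of `K`. -/
theorem limit_kernel_invariant_and_minimal {X : Type*} {m : ℕ}
    (φ : Fin m → X → X) (K : X → X → ℂ) (hK : IsPD K)
    (hsub : IsPD (fun s t => Lop φ K s t - K s t))
    (hbdd : ∀ s : X, ∃ C : ℝ, ∀ n : ℕ, (((Lop φ)^[n] K) s s).re ≤ C)
    (Kinf : X → X → ℂ)
    (hlim : ∀ s t : X,
      Tendsto (fun n => ((Lop φ)^[n] K) s t) atTop (nhds (Kinf s t))) :
    Lop φ Kinf = Kinf ∧
    IsPD (fun s t => Kinf s t - K s t) ∧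
    (∀ J : X → X → ℂ, IsPD J → IsPD (fun s t => J s t - K s t) →
      Lop φ J = J → IsPD (fun s t => J s t - Kinf s t)) := by
  -- successive differences are PD
  have hdiff : ∀ n : ℕ, IsPD (fun s t => ((Lop φ)^[n+1] K) s t - ((Lop φ)^[n] K) s t) := by
    intro n
    induction n with
    | zero => simpa using hsub
    | succ n ih =>
      have h1 : (fun s t => ((Lop φ)^[n+2] K) s t - ((Lop φ)^[n+1] K) s t)
          = Lop φ (fun s t => ((Lop φ)^[n+1] K) s t - ((Lop φ)^[n] K) s t) := by
        rw [Lop_sub]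
        funext s t
        rw [Function.iterate_succ_apply' (Lop φ) (n+1) K,
            Function.iterate_succ_apply' (Lop φ) n K]
      rw [h1]
      exact isPD_Lop φ ih
  -- K_n - K is PD
  have hKnK : ∀ n : ℕ, IsPD (fun s t => ((Lop φ)^[n] K) s t - K s t) := by
    intro n
    induction n with
    | zero => intro r x c; simp
    | succ n ih =>
      have := isPD_add (hdiff n) ih
      simpa [sub_add_sub_cancel] using this
  refine ⟨?_, ?_, ?_⟩
  · -- L Kinf = Kinf
    funext s t
    have h1 : Tendsto (fun n => ((Lop φ)^[n+1] K) s t) atTop (nhds (Kinf s t)) :=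
      (hlim s t).comp (tendsto_add_atTop_nat 1)
    have h2 : Tendsto (fun n => ((Lop φ)^[n+1] K) s t) atTop (nhds (Lop φ Kinf s t)) := by
      have : ∀ n, ((Lop φ)^[n+1] K) s t = ∑ i, ((Lop φ)^[n] K) (φ i s) (φ i t) := by
        intro n; rw [Function.iterate_succ_apply' (Lop φ) n K]; rfl
      simp only [this]
      exact tendsto_finset_sum _ fun i _ => hlim (φ i s) (φ i t)
    exact tendsto_nhds_unique h2 h1
  · -- Kinf - K is PD
    exact isPD_limit (fun s t => (hlim s t).sub tendsto_const_nhds) hKnK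
  · -- minimality
    intro J hJ hJK hLJ
    have hJn : ∀ n : ℕ, IsPD (fun s t => J s t - ((Lop φ)^[n] K) s t) := by
      intro n
      induction n with
      | zero => simpa using hJK
      | succ n ih =>
        have h1 : (fun s t => J s t - ((Lop φ)^[n+1] K) s t)
            = Lop φ (fun s t => J s t - ((Lop φ)^[n] K) s t) := by
          rw [Lop_sub]
          funext s t
          rw [Function.iterate_succ_apply' (Lop φ) n K]
          conv_lhs => rw [← hLJ]
        rw [h1]
        exact isPD_Lop φ ih
    exact isPD_limit (fun s t => tendsto_const_nhds.sub (hlim s t)) hJn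
end

section
/- In the prefixing example with parameters 0 < r < 1, 0 < c < 1, η > 0, let E(u,v) := c·r^{|u|}·m^{−|u|}·δ_{u,v} and K := J₀ + η·J₁ − E. Then LE = r·E, K is positive definite, LK − K = (1−r)·E is positive definite and nonzero, the iterates satisfy Lⁿ K = J₀ + η J₁ − rⁿ E, and consequently K_n converges pointwise to K_∞ = J₀ + η J₁ with sup_n K_n(s,s) ≤ (1+η)·m^{−|s|} < ∞ for every word s. -/
open scoped ComplexOrder

open Filter

def prefixMap (m : ℕ) (i : Fin m) (w : List (Fin m)) : List (Fin m) := i :: w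

noncomputable def J0 (m : ℕ) (u v : List (Fin m)) : ℂ :=
  if u = v then ((m : ℂ) ^ u.length)⁻¹ else 0

noncomputable def J1 (m : ℕ) (u v : List (Fin m)) : ℂ :=
  (((m : ℝ) ^ (-(((u.length : ℝ) + (v.length : ℝ)) / 2)) : ℝ) : ℂ)

/-- `E(u,v) = c·r^{|u|}·m^{-|u|}·δ_{u,v}`. -/
noncomputable def Eker (m : ℕ) (c r : ℝ) (u v : List (Fin m)) : ℂ :=
  if u = v then ((c * r ^ u.length / (m : ℝ) ^ u.length : ℝ) : ℂ) else 0

/-- `K = J₀ + η J₁ − E`. -/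
noncomputable def Kex (m : ℕ) (c r η : ℝ) (u v : List (Fin m)) : ℂ :=
  J0 m u v + (η : ℂ) * J1 m u v - Eker m c r u v

/-! ### Auxiliary positivity lemmas -/

lemma isPD_rankOne {X : Type*} (g : X → ℝ) :
    IsPD (fun u v => ((g u * g v : ℝ) : ℂ)) := by
  intro r x cc
  have : ∑ a, ∑ b, (starRingEnd ℂ) (cc a) * cc b * ((g (x a) * g (x b) : ℝ) : ℂ)
      = (starRingEnd ℂ) (∑ a, cc a * (g (x a) : ℂ)) * (∑ a, cc a * (g (x a) : ℂ)) := by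
    rw [map_sum, Finset.sum_mul_sum]
    refine Finset.sum_congr rfl fun a _ => Finset.sum_congr rfl fun b _ => ?_
    rw [map_mul, Complex.conj_ofReal]
    push_cast
    ring
  rw [this]
  exact star_mul_self_nonneg _

lemma isPD_diag_s19 {X : Type*} [DecidableEq X] (f : X → ℝ) (hf : ∀ u, 0 ≤ f u) :
    IsPD (fun u v => if u = v then (f u : ℂ) else 0) := by
  intro r x cc
  classical
  set d : Fin r → ℂ := fun a => cc a * (Real.sqrt (f (x a)) : ℂ) with hd
  set F : X → ℂ := fun u => ∑ b ∈ Finset.univ.filter (fun b => x b = u), d b with hF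
  have key : ∀ a b : Fin r,
      (starRingEnd ℂ) (cc a) * cc b * (if x a = x b then (f (x a) : ℂ) else 0)
        = if x b = x a then (starRingEnd ℂ) (d a) * d b else 0 := by
    intro a b
    by_cases h : x a = x b
    · have hsq : ((Real.sqrt (f (x a)) : ℂ)) * ((Real.sqrt (f (x b)) : ℂ)) = (f (x a) : ℂ) := by
        rw [← h, ← Complex.ofReal_mul, Real.mul_self_sqrt (hf _)]
      rw [if_pos h, if_pos h.symm, hd]
      simp only [map_mul, Complex.conj_ofReal]
      calc (starRingEnd ℂ) (cc a) * cc b * (f (x a) : ℂ)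
          = (starRingEnd ℂ) (cc a) * cc b *
            ((Real.sqrt (f (x a)) : ℂ) * (Real.sqrt (f (x b)) : ℂ)) := by rw [hsq]
        _ = (starRingEnd ℂ) (cc a) * (Real.sqrt (f (x a)) : ℂ) *
            (cc b * (Real.sqrt (f (x b)) : ℂ)) := by ring
    · rw [if_neg h, if_neg (fun hh => h hh.symm), mul_zero]
  have step : (∑ a, ∑ b, (starRingEnd ℂ) (cc a) * cc b * (if x a = x b then (f (x a) : ℂ) else 0))
      = ∑ u ∈ Finset.univ.image x, (starRingEnd ℂ) (F u) * F u := calc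
    ∑ a, ∑ b, (starRingEnd ℂ) (cc a) * cc b * (if x a = x b then (f (x a) : ℂ) else 0)
      = ∑ a, ∑ b, (if x b = x a then (starRingEnd ℂ) (d a) * d b else 0) := by
        exact Finset.sum_congr rfl fun a _ => Finset.sum_congr rfl fun b _ => key a b
    _ = ∑ a, (starRingEnd ℂ) (d a) * F (x a) := by
        refine Finset.sum_congr rfl fun a _ => ?_
        rw [hF]
        rw [← Finset.sum_filter, Finset.mul_sum]
    _ = ∑ u ∈ Finset.univ.image x, ∑ a ∈ Finset.univ.filter (fun a => x a = u),
          (starRingEnd ℂ) (d a) * F (x a) :=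
        (Finset.sum_fiberwise_of_maps_to (fun a _ => Finset.mem_image_of_mem x (Finset.mem_univ a)) _).symm
    _ = ∑ u ∈ Finset.univ.image x, (starRingEnd ℂ) (F u) * F u := by
        refine Finset.sum_congr rfl fun u hu => ?_
        rw [hF, map_sum, Finset.sum_mul]
        refine Finset.sum_congr rfl fun a ha => ?_
        rw [(Finset.mem_filter.mp ha).2]
  show (0:ℂ) ≤ ∑ a, ∑ b, (starRingEnd ℂ) (cc a) * cc b * (if x a = x b then (f (x a) : ℂ) else 0)
  rw [step]
  exact Finset.sum_nonneg fun u _ => star_mul_self_nonneg _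

lemma isPD_add_s19 {X : Type*} {J K : X → X → ℂ} (hJ : IsPD J) (hK : IsPD K) :
    IsPD (fun u v => J u v + K u v) := by
  intro r x cc
  have h1 := hJ r x cc
  have h2 := hK r x cc
  simp only [mul_add, Finset.sum_add_distrib]
  exact add_nonneg h1 h2

lemma isPD_smul {X : Type*} (t : ℝ) (ht : 0 ≤ t) {J : X → X → ℂ} (hJ : IsPD J) :
    IsPD (fun u v => (t : ℂ) * J u v) := by
  intro r x cc
  have h1 := hJ r x cc
  have : ∑ a, ∑ b, (starRingEnd ℂ) (cc a) * cc b * ((t : ℂ) * J (x a) (x b))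
      = (t : ℂ) * ∑ a, ∑ b, (starRingEnd ℂ) (cc a) * cc b * J (x a) (x b) := by
    rw [Finset.mul_sum]
    refine Finset.sum_congr rfl fun a _ => ?_
    rw [Finset.mul_sum]
    exact Finset.sum_congr rfl fun b _ => by ring
  rw [this]
  exact mul_nonneg (Complex.zero_le_real.mpr ht) h1

/-! ### Branching sums -/

lemma sumJ0 {m : ℕ} (hm : 2 ≤ m) (u v : List (Fin m)) :
    ∑ i : Fin m, J0 m (i :: u) (i :: v) = J0 m u v := by
  have hm0 : (m : ℂ) ≠ 0 := by positivity
  simp only [J0, List.cons.injEq, true_and, List.length_cons]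
  by_cases h : u = v
  · simp [h, Finset.sum_const, Finset.card_univ]
    field_simp
    ring
  · simp [h]

lemma sumE {m : ℕ} (c r : ℝ) (hm : 2 ≤ m) (u v : List (Fin m)) :
    ∑ i : Fin m, Eker m c r (i :: u) (i :: v) = (r : ℂ) * Eker m c r u v := by
  have hm0 : (m : ℝ) ≠ 0 := by positivity
  simp only [Eker, List.cons.injEq, true_and, List.length_cons]
  by_cases h : u = v
  · simp [h, Finset.sum_const, Finset.card_univ]
    field_simp
    ring
  · simp [h]

lemma sumJ1 {m : ℕ} (hm : 2 ≤ m) (u v : List (Fin m)) :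
    ∑ i : Fin m, J1 m (i :: u) (i :: v) = J1 m u v := by
  have hmp : (0:ℝ) < (m:ℝ) := by positivity
  have key : (m:ℝ) ^ (-(((u.length : ℝ) + 1 + ((v.length : ℝ) + 1)) / 2))
      = (m:ℝ) ^ (-(((u.length : ℝ) + (v.length : ℝ)) / 2)) * ((m:ℝ))⁻¹ := by
    rw [show (-(((u.length : ℝ) + 1 + ((v.length : ℝ) + 1)) / 2))
      = (-(((u.length : ℝ) + (v.length : ℝ)) / 2)) + (-1) by ring,
      Real.rpow_add hmp, Real.rpow_neg_one]
  simp only [J1, List.length_cons]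
  push_cast
  rw [key, Finset.sum_const, Finset.card_univ, Fintype.card_fin, nsmul_eq_mul]
  push_cast
  have hm0 : (m : ℂ) ≠ 0 := by positivity
  field_simp

/-- in the prefixing example, `LE = r·E`, `K` is positive
definite, `LK − K = (1−r)·E` is positive definite and nonzero,
`Lⁿ K = J₀ + η J₁ − rⁿ E`, the tower converges pointwise to `J₀ + η J₁`, and
the diagonals are bounded by `(1+η)·m^{-|s|}`. -/
theorem prefix_example_full (m : ℕ) (hm : 2 ≤ m) (c r η : ℝ)
    (hr0 : 0 < r) (hr1 : r < 1) (hc0 : 0 < c) (hc1 : c < 1) (hη : 0 < η) :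
    Lop (prefixMap m) (Eker m c r) = (fun u v => (r : ℂ) * Eker m c r u v) ∧
    IsPD (Kex m c r η) ∧
    (fun u v => Lop (prefixMap m) (Kex m c r η) u v - Kex m c r η u v)
      = (fun u v => ((1 - r : ℝ) : ℂ) * Eker m c r u v) ∧
    IsPD (fun u v => ((1 - r : ℝ) : ℂ) * Eker m c r u v) ∧
    (fun u v => ((1 - r : ℝ) : ℂ) * Eker m c r u v) ≠ (fun _ _ => (0 : ℂ)) ∧
    (∀ n : ℕ, (Lop (prefixMap m))^[n] (Kex m c r η)
      = fun u v => J0 m u v + (η : ℂ) * J1 m u v - (r : ℂ) ^ n * Eker m c r u v) ∧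
    (∀ s t : List (Fin m),
      Tendsto (fun n => ((Lop (prefixMap m))^[n] (Kex m c r η)) s t) atTop
        (nhds (J0 m s t + (η : ℂ) * J1 m s t))) ∧
    (∀ (n : ℕ) (s : List (Fin m)),
      (((Lop (prefixMap m))^[n] (Kex m c r η)) s s).re
        ≤ (1 + η) / (m : ℝ) ^ s.length) := by
  have hm0R : (0:ℝ) < (m:ℝ) := by positivity
  have hm0C : (m : ℂ) ≠ 0 := by positivity
  -- LE = r·E
  have hLE : Lop (prefixMap m) (Eker m c r) = fun u v => (r : ℂ) * Eker m c r u v := by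
    funext u v
    exact sumE c r hm u v
  -- iterate formula
  have hiter : ∀ n : ℕ, (Lop (prefixMap m))^[n] (Kex m c r η)
      = fun u v => J0 m u v + (η : ℂ) * J1 m u v - (r : ℂ) ^ n * Eker m c r u v := by
    intro n
    induction n with
    | zero => funext u v; simp [Kex]
    | succ n ih =>
      rw [Function.iterate_succ_apply', ih]
      funext u v
      show ∑ i : Fin m, (J0 m (i :: u) (i :: v) + (η : ℂ) * J1 m (i :: u) (i :: v)
          - (r : ℂ) ^ n * Eker m c r (i :: u) (i :: v)) = _
      rw [Finset.sum_sub_distrib, Finset.sum_add_distrib, ← Finset.mul_sum, ← Finset.mul_sum,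
        sumJ0 hm, sumJ1 hm, sumE c r hm]
      ring
  -- K is PD
  have hKPD : IsPD (Kex m c r η) := by
    have hKeq : Kex m c r η = fun u v =>
        (if u = v then (((1 - c * r ^ u.length) / (m:ℝ) ^ u.length : ℝ) : ℂ) else 0)
        + (η : ℂ) * ((((m:ℝ) ^ (-((u.length:ℝ))/2)) * ((m:ℝ) ^ (-((v.length:ℝ))/2)) : ℝ) : ℂ) := by
      funext u v
      have hg : (m:ℝ) ^ (-(((u.length : ℝ) + (v.length : ℝ)) / 2))
          = ((m:ℝ) ^ (-((u.length:ℝ))/2)) * ((m:ℝ) ^ (-((v.length:ℝ))/2)) := by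
        rw [← Real.rpow_add hm0R]
        ring_nf
      simp only [Kex, J0, J1, Eker, hg]
      by_cases h : u = v
      · subst h
        rw [if_pos rfl, if_pos rfl, if_pos rfl]
        push_cast
        have : ((m:ℂ) ^ u.length) ≠ 0 := by positivity
        field_simp
        ring
      · rw [if_neg h, if_neg h, if_neg h]
        ring
    rw [hKeq]
    refine isPD_add_s19 (isPD_diag_s19 _ fun u => ?_)
      (isPD_smul η hη.le (isPD_rankOne fun w : List (Fin m) => (m:ℝ) ^ (-((w.length:ℝ))/2)))
    apply div_nonneg _ (by positivity)
    have h1 : r ^ u.length ≤ 1 := pow_le_one₀ hr0.le hr1.le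
    nlinarith
  -- LK − K = (1−r)E
  have hLK : (fun u v => Lop (prefixMap m) (Kex m c r η) u v - Kex m c r η u v)
      = fun u v => ((1 - r : ℝ) : ℂ) * Eker m c r u v := by
    funext u v
    have h1 := congrFun (congrFun (hiter 1) u) v
    rw [Function.iterate_one] at h1
    show Lop (prefixMap m) (Kex m c r η) u v - Kex m c r η u v = _
    rw [h1, Kex]
    push_cast
    ring
  -- (1−r)E is PD
  have hEPD : IsPD (fun u v => ((1 - r : ℝ) : ℂ) * Eker m c r u v) := by
    have hE : IsPD (Eker m c r) :=
      isPD_diag_s19 (fun u : List (Fin m) => c * r ^ u.length / (m:ℝ) ^ u.length)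
        (fun u => by positivity)
    exact isPD_smul (1 - r) (by linarith) hE
  -- nonzero
  have hne : (fun u v => ((1 - r : ℝ) : ℂ) * Eker m c r u v)
      ≠ (fun _ _ => (0 : ℂ)) := by
    intro h
    have h0 := congrFun (congrFun h ([] : List (Fin m))) []
    simp only [Eker, if_pos rfl, List.length_nil, pow_zero, if_true, mul_one] at h0
    rw [← Complex.ofReal_mul, Complex.ofReal_eq_zero] at h0
    nlinarith [h0]
  -- tendsto
  have htend : ∀ s t : List (Fin m),
      Tendsto (fun n => ((Lop (prefixMap m))^[n] (Kex m c r η)) s t) atTop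
        (nhds (J0 m s t + (η : ℂ) * J1 m s t)) := by
    intro s t
    have h0 : Tendsto (fun n : ℕ => (r : ℂ) ^ n) atTop (nhds 0) := by
      apply tendsto_pow_atTop_nhds_zero_of_norm_lt_one
      rw [Complex.norm_real, Real.norm_eq_abs, abs_of_pos hr0]
      exact hr1
    have hconst : Tendsto (fun _ : ℕ => J0 m s t + (η : ℂ) * J1 m s t) atTop
        (nhds (J0 m s t + (η : ℂ) * J1 m s t)) := tendsto_const_nhds
    have := hconst.sub (h0.mul_const (Eker m c r s t))
    simp only [zero_mul, sub_zero] at this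
    simpa only [hiter] using this
  -- bound
  have hbound : ∀ (n : ℕ) (s : List (Fin m)),
      (((Lop (prefixMap m))^[n] (Kex m c r η)) s s).re
        ≤ (1 + η) / (m : ℝ) ^ s.length := by
    intro n s
    have hJ1 : (m:ℝ) ^ (-(((s.length:ℝ) + (s.length:ℝ)) / 2)) = 1 / (m:ℝ) ^ s.length := by
      rw [show (-(((s.length:ℝ) + (s.length:ℝ)) / 2)) = -((s.length : ℕ) : ℝ) by push_cast; ring,
        Real.rpow_neg hm0R.le, Real.rpow_natCast, one_div]
    have hval : ((Lop (prefixMap m))^[n] (Kex m c r η)) s s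
        = (((1 / (m:ℝ) ^ s.length) + η * (1 / (m:ℝ) ^ s.length)
            - r ^ n * (c * r ^ s.length / (m:ℝ) ^ s.length) : ℝ) : ℂ) := by
      rw [hiter n]
      simp only [J0, J1, Eker, if_pos rfl, hJ1]
      push_cast
      have : ((m:ℂ) ^ s.length) ≠ 0 := by positivity
      field_simp
    rw [hval, Complex.ofReal_re]
    have h1 : 0 ≤ r ^ n * (c * r ^ s.length / (m:ℝ) ^ s.length) := by positivity
    have h2 : (1 + η) / (m:ℝ) ^ s.length
        = 1 / (m:ℝ) ^ s.length + η * (1 / (m:ℝ) ^ s.length) := by ring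
    linarith
  exact ⟨hLE, hKPD, hLK, hEPD, hne, hiter, htend, hbound⟩
end
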